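/- Let S be a compact metric space, f_j : S^N → ℝ continuous, and define F_j(μ) = ∫_{S^N} f_j(s) dμ_1(s_1)⋯dμ_N(s_N) for μ ∈ P(S)^N. Then the inequality ∑_j (F_j(μ) + F_j(ν)) ≥ ∑_j (F_j(ν_j, μ_{-j}) + F_j(μ_j, ν_{-j})) holds for all μ, ν ∈ P(S)^N if and only if ∑_j (f_j(s) + f_j(t)) ≥ ∑_j (f_j(s_j, t_{-j}) + f_j(t_j, s_{-j})) holds for all s, t ∈ S^N. -/

import Mathlib

open MeasureTheory Set

section Aux

variable {S : Type*} [MetricSpace S] [CompactSpace S]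
    [MeasurableSpace S] [BorelSpace S] {N : ℕ}

lemma pi_dirac_eq (s : Fin N → S) :
    Measure.pi (fun i => Measure.dirac (s i)) = Measure.dirac s := by
  refine Measure.pi_eq fun A hA => ?_
  rw [Measure.dirac_apply' _ (MeasurableSet.univ_pi hA)]
  by_cases h : ∀ i, s i ∈ A i
  · rw [indicator_of_mem (by simpa [Set.mem_univ_pi] using h)]
    simp [Measure.dirac_apply' _ (hA _), indicator_of_mem, h]
  · push_neg at h
    obtain ⟨i, hi⟩ := h
    rw [indicator_of_notMem (by simpa [Set.mem_univ_pi] using ⟨i, hi⟩)]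
    exact (Finset.prod_eq_zero (Finset.mem_univ i)
      (by simp [Measure.dirac_apply' _ (hA i), indicator_of_notMem hi])).symm

lemma pi_update_eq_map (μ ν : Fin N → Measure S)
    (hμ : ∀ i, IsProbabilityMeasure (μ i)) (hν : ∀ i, IsProbabilityMeasure (ν i)) (j : Fin N) :
    Measure.pi (Function.update μ j (ν j)) =
      ((Measure.pi μ).prod (Measure.pi ν)).map
        (fun p : (Fin N → S) × (Fin N → S) => Function.update p.1 j (p.2 j)) := by
  have hmeas : Measurable (fun p : (Fin N → S) × (Fin N → S) => Function.update p.1 j (p.2 j)) := by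
    refine measurable_pi_lambda _ fun i => ?_
    rcases eq_or_ne i j with rfl | hi
    · simpa [Function.comp_def] using (measurable_pi_apply i).comp measurable_snd
    · simpa [Function.update_of_ne hi, Function.comp_def] using (measurable_pi_apply i).comp measurable_fst
  haveI : ∀ i, SigmaFinite (Function.update μ j (ν j) i) := by
    intro i
    rcases eq_or_ne i j with rfl | hi
    · simp only [Function.update_self]; infer_instance
    · simp only [Function.update_of_ne hi]; infer_instance
  refine Measure.pi_eq fun A hA => ?_
  rw [Measure.map_apply hmeas (MeasurableSet.univ_pi hA)]
  have hpre : (fun p : (Fin N → S) × (Fin N → S) => Function.update p.1 j (p.2 j)) ⁻¹'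
      (Set.pi univ A) =
      (Set.pi univ (fun i => if i = j then univ else A i)) ×ˢ
        (Set.pi univ (fun i => if i = j then A j else univ)) := by
    ext p
    simp only [Set.mem_preimage, Set.mem_univ_pi, Set.mem_prod]
    constructor
    · intro h
      refine ⟨fun i => ?_, fun i => ?_⟩
      · rcases eq_or_ne i j with rfl | hi
        · simp
        · simpa [hi, Function.update_of_ne hi] using h i
      · rcases eq_or_ne i j with rfl | hi
        · simpa using h i
        · simp [hi]
    · rintro ⟨h1, h2⟩ i
      rcases eq_or_ne i j with rfl | hi
      · simpa using h2 i
      · simpa [Function.update_of_ne hi] using by simpa [hi] using h1 i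
  rw [hpre, Measure.prod_prod, Measure.pi_pi, Measure.pi_pi]
  rw [← Finset.prod_erase_mul _ _ (Finset.mem_univ j),
    ← Finset.prod_erase_mul _ _ (Finset.mem_univ j),
    ← Finset.prod_erase_mul _ (fun i => (Function.update μ j (ν j) i) (A i)) (Finset.mem_univ j)]
  have h1 : ∀ i ∈ Finset.univ.erase j,
      (μ i) (if i = j then univ else A i) = (μ i) (A i) := by
    intro i hi
    simp [Finset.ne_of_mem_erase hi]
  have h2 : ∀ i ∈ Finset.univ.erase j,
      (ν i) (if i = j then A j else univ) = 1 := by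
    intro i hi
    simp [Finset.ne_of_mem_erase hi, (hν i).measure_univ]
  have h3 : ∀ i ∈ Finset.univ.erase j,
      (Function.update μ j (ν j) i) (A i) = (μ i) (A i) := by
    intro i hi
    simp [Function.update_of_ne (Finset.ne_of_mem_erase hi)]
  rw [Finset.prod_congr rfl h1, Finset.prod_congr rfl h2, Finset.prod_congr rfl h3]
  simp [(hμ j).measure_univ, mul_comm, mul_assoc, mul_left_comm]

end Aux

/-- The mixed extension of a game with continuous costs on a compact metric space is
monotone (in the integrated sense) iff the underlying costs are monotone pointwise. -/
theorem mixed_monotone_iff_pure_monotone {S : Type*} [MetricSpace S] [CompactSpace S]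
    [MeasurableSpace S] [BorelSpace S] {N : ℕ}
    (f : Fin N → ((Fin N → S) → ℝ)) (hf : ∀ j, Continuous (f j)) :
    (∀ μ ν : Fin N → Measure S,
        (∀ j, IsProbabilityMeasure (μ j)) → (∀ j, IsProbabilityMeasure (ν j)) →
        ∑ j, ((∫ s, f j s ∂Measure.pi μ) + ∫ s, f j s ∂Measure.pi ν) ≥
          ∑ j, ((∫ s, f j s ∂Measure.pi (Function.update μ j (ν j))) +
            ∫ s, f j s ∂Measure.pi (Function.update ν j (μ j)))) ↔
      (∀ s t : Fin N → S,
        ∑ j, (f j s + f j t) ≥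
          ∑ j, (f j (Function.update s j (t j)) + f j (Function.update t j (s j)))) := by
  constructor
  · -- mixed ⇒ pure: plug in Dirac measures
    intro h s t
    have := h (fun i => Measure.dirac (s i)) (fun i => Measure.dirac (t i))
      (fun i => inferInstance) (fun i => inferInstance)
    simp only [pi_dirac_eq] at this
    have hupd : ∀ j, (Function.update (fun i => Measure.dirac (s i)) j (Measure.dirac (t j)))
        = fun i => Measure.dirac (Function.update s j (t j) i) := by
      intro j
      ext1 i
      rcases eq_or_ne i j with rfl | hi
      · simp
      · simp [Function.update_of_ne hi]
    have hupd' : ∀ j, (Function.update (fun i => Measure.dirac (t i)) j (Measure.dirac (s j)))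
        = fun i => Measure.dirac (Function.update t j (s j) i) := by
      intro j
      ext1 i
      rcases eq_or_ne i j with rfl | hi
      · simp
      · simp [Function.update_of_ne hi]
    simp only [hupd, hupd', pi_dirac_eq] at this
    have hmeas : ∀ j (u : Fin N → S), ∫ x, f j x ∂(Measure.dirac u) = f j u := fun j u =>
      integral_dirac' _ _ (hf j).stronglyMeasurable
    simpa only [hmeas] using this
  · -- pure ⇒ mixed: integrate the pointwise inequality
    intro h μ ν hμ hν
    haveI := fun i => hμ i
    haveI := fun i => hν i
    set P := Measure.pi μ with hP
    set Q := Measure.pi ν with hQ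
    haveI : IsProbabilityMeasure P := by infer_instance
    haveI : IsProbabilityMeasure Q := by infer_instance
    -- express everything as an integral over P.prod Q
    have hmeasφ : ∀ j, Measurable
        (fun p : (Fin N → S) × (Fin N → S) => Function.update p.1 j (p.2 j)) := by
      intro j
      refine measurable_pi_lambda _ fun i => ?_
      rcases eq_or_ne i j with rfl | hi
      · simpa [Function.comp_def] using (measurable_pi_apply i).comp measurable_snd
      · simpa [Function.update_of_ne hi, Function.comp_def] using (measurable_pi_apply i).comp measurable_fst
    have hcontφ : ∀ j, Continuous
        (fun p : (Fin N → S) × (Fin N → S) => Function.update p.1 j (p.2 j)) := by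
      intro j
      refine continuous_pi fun i => ?_
      rcases eq_or_ne i j with rfl | hi
      · simpa [Function.comp_def] using (continuous_apply i).comp continuous_snd
      · simpa [Function.update_of_ne hi, Function.comp_def] using (continuous_apply i).comp continuous_fst
    have hint : ∀ (g : ((Fin N → S) × (Fin N → S)) → ℝ), Continuous g →
        Integrable g (P.prod Q) := fun g hg =>
      hg.integrable_of_hasCompactSupport (HasCompactSupport.of_compactSpace g)
    have hI1 : ∀ j, ∫ s, f j s ∂P = ∫ p, f j p.1 ∂(P.prod Q) := by
      intro j
      rw [integral_fun_fst (f := f j)]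
      simp [measure_univ]
    have hI2 : ∀ j, ∫ s, f j s ∂Q = ∫ p, f j p.2 ∂(P.prod Q) := by
      intro j
      rw [integral_fun_snd (f := f j)]
      simp [measure_univ]
    have hI3 : ∀ j, ∫ s, f j s ∂Measure.pi (Function.update μ j (ν j)) =
        ∫ p, f j (Function.update p.1 j (p.2 j)) ∂(P.prod Q) := by
      intro j
      rw [pi_update_eq_map μ ν hμ hν j]
      exact integral_map (hmeasφ j).aemeasurable (hf j).stronglyMeasurable.aestronglyMeasurable
    have hI4 : ∀ j, ∫ s, f j s ∂Measure.pi (Function.update ν j (μ j)) =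
        ∫ p, f j (Function.update p.1 j (p.2 j)) ∂(Q.prod P) := by
      intro j
      rw [pi_update_eq_map ν μ hν hμ j]
      exact integral_map (hmeasφ j).aemeasurable (hf j).stronglyMeasurable.aestronglyMeasurable
    -- swap in hI4 to be over P.prod Q
    have hswap : ∀ j, ∫ p, f j (Function.update p.1 j (p.2 j)) ∂(Q.prod P) =
        ∫ p, f j (Function.update p.2 j (p.1 j)) ∂(P.prod Q) := by
      intro j
      exact integral_prod_swap (fun p : (Fin N → S) × (Fin N → S) =>
        f j (Function.update p.2 j (p.1 j)))
    have key1 : ∀ j : Fin N, (∫ p, f j p.1 ∂(P.prod Q)) + ∫ p, f j p.2 ∂(P.prod Q)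
        = ∫ p, (f j p.1 + f j p.2) ∂(P.prod Q) := fun j =>
      (integral_add (hint _ ((hf j).comp continuous_fst))
        (hint _ ((hf j).comp continuous_snd))).symm
    have key2 : ∀ j : Fin N,
        (∫ p, f j (Function.update p.1 j (p.2 j)) ∂(P.prod Q)) +
          ∫ p, f j (Function.update p.2 j (p.1 j)) ∂(P.prod Q)
        = ∫ p, (f j (Function.update p.1 j (p.2 j)) + f j (Function.update p.2 j (p.1 j)))
            ∂(P.prod Q) := fun j =>
      (integral_add (hint _ ((hf j).comp (hcontφ j)))
        (hint _ ((hf j).comp ((hcontφ j).comp continuous_swap)))).symm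
    simp only [hI1, hI2, hI3, hI4, hswap, key1, key2]
    rw [← integral_finset_sum _ (fun j _ => (hint
        (fun p : (Fin N → S) × (Fin N → S) => f j p.1 + f j p.2)
        (((hf j).comp continuous_fst).add ((hf j).comp continuous_snd)))),
      ← integral_finset_sum _ (fun j _ => (hint
        (fun p : (Fin N → S) × (Fin N → S) =>
          f j (Function.update p.1 j (p.2 j)) + f j (Function.update p.2 j (p.1 j)))
        (((hf j).comp (hcontφ j)).add ((hf j).comp ((hcontφ j).comp continuous_swap)))))]
    refine integral_mono ?_ ?_ ?_
    · exact integrable_finset_sum _ (fun j _ => (hint _ (((hf j).comp (hcontφ j)).add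
        ((hf j).comp ((hcontφ j).comp continuous_swap)))))
    · exact integrable_finset_sum _ (fun j _ => (hint _ (((hf j).comp continuous_fst).add
        ((hf j).comp continuous_snd))))
    · intro p
      exact h p.1 p.2
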